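/- Fix x ∈ (0,1). Then the function t ↦ F(x,t) is strictly monotone decreasing on the interval [x,1], with F(x,x) = 0 and F(x,1) = −H(x)/2; moreover, for every t ∈ (x,1) its derivative with respect to t equals (x/2)·log(1 − (t−x)/(t·(1−(2−t)·x))). -/

import Mathlib

/-- `h x = -x log x` (with `h 0 = 0`, since `Real.log 0 = 0`). -/
noncomputable def entH (x : ℝ) : ℝ := -x * Real.log x

/-- `H x = h x + h (1 - x)`. -/
noncomputable def entHH (x : ℝ) : ℝ := entH x + entH (1 - x)

/-- The rate function `F(x,t)`. -/
noncomputable def entF (x t : ℝ) : ℝ :=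
  (1 / 2) * entH (t * x) + entH ((1 - t) * x) + (1 / 2) * entH (1 - (2 - t) * x) - entHH x

lemma entH_continuous : Continuous entH := by
  unfold entH
  simpa [neg_mul] using (show Continuous fun x : ℝ => -(x * Real.log x) from Real.continuous_mul_log.neg)

lemma entH_hasDerivAt {y : ℝ} (hy : y ≠ 0) :
    HasDerivAt entH (-(Real.log y + 1)) y := by
  unfold entH
  simpa [neg_mul] using (show HasDerivAt (fun x : ℝ => -(x * Real.log x)) (-(Real.log y + 1)) y from (Real.hasDerivAt_mul_log hy).neg)

theorem stmt_11 (x : ℝ) (hx : x ∈ Set.Ioo (0 : ℝ) 1) :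
    StrictAntiOn (fun t => entF x t) (Set.Icc x 1) ∧
    entF x x = 0 ∧ entF x 1 = -entHH x / 2 ∧
    ∀ t ∈ Set.Ioo x 1,
      HasDerivAt (fun t => entF x t)
        (x / 2 * Real.log (1 - (t - x) / (t * (1 - (2 - t) * x)))) t := by
  obtain ⟨hx0, hx1⟩ := hx
  have key : ∀ t ∈ Set.Ioo x 1,
      HasDerivAt (fun t => entF x t)
        (x / 2 * Real.log (1 - (t - x) / (t * (1 - (2 - t) * x)))) t := by
    intro t ht
    obtain ⟨htx, ht1⟩ := ht
    have ht0 : 0 < t := hx0.trans htx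
    have h1t : 0 < 1 - t := by linarith
    have hd : 0 < 1 - (2 - t) * x := by nlinarith
    have h1 : HasDerivAt (fun t : ℝ => entH (t * x)) (-(Real.log (t * x) + 1) * x) t := by
      exact (entH_hasDerivAt (by positivity)).comp t (hasDerivAt_mul_const x)
    have h2 : HasDerivAt (fun t : ℝ => entH ((1 - t) * x))
        (-(Real.log ((1 - t) * x) + 1) * (-x)) t := by
      have hg : HasDerivAt (fun t : ℝ => (1 - t) * x) (-x) t := by
        have := ((hasDerivAt_id t).const_sub 1).mul_const x
        simpa using this
      exact (entH_hasDerivAt (by positivity)).comp t hg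
    have h3 : HasDerivAt (fun t : ℝ => entH (1 - (2 - t) * x))
        (-(Real.log (1 - (2 - t) * x) + 1) * x) t := by
      have hg : HasDerivAt (fun t : ℝ => 1 - (2 - t) * x) x t := by
        have := (((hasDerivAt_id t).const_sub 2).mul_const x).const_sub 1
        simpa using this
      exact (entH_hasDerivAt hd.ne').comp t hg
    have hF : HasDerivAt (fun t => entF x t)
        ((1 / 2) * (-(Real.log (t * x) + 1) * x) + (-(Real.log ((1 - t) * x) + 1) * (-x))
          + (1 / 2) * (-(Real.log (1 - (2 - t) * x) + 1) * x)) t := by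
      unfold entF
      exact (((h1.const_mul (1/2 : ℝ)).add h2).add (h3.const_mul (1/2 : ℝ))).sub_const _
    convert hF using 1
    have hA : 1 - (t - x) / (t * (1 - (2 - t) * x))
        = (x * ((1 - t) * (1 - t))) / (t * (1 - (2 - t) * x)) := by
      rw [eq_div_iff (mul_pos ht0 hd).ne', sub_mul, div_mul_cancel₀ _ (mul_pos ht0 hd).ne']
      ring
    rw [hA, Real.log_div (by positivity) (by positivity), Real.log_mul (by positivity)
      (by positivity), Real.log_mul (by positivity) (by positivity),
      Real.log_mul ht0.ne' hx0.ne', Real.log_mul h1t.ne' hx0.ne',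
      Real.log_mul ht0.ne' hd.ne']
    ring
  have hc : Continuous fun t => entF x t := by
    unfold entF
    exact (((continuous_const.mul (entH_continuous.comp ((continuous_id).mul
      continuous_const))).add (entH_continuous.comp ((continuous_const.sub
      continuous_id).mul continuous_const))).add (continuous_const.mul
      (entH_continuous.comp (continuous_const.sub ((continuous_const.sub
      continuous_id).mul continuous_const))))).sub continuous_const
  refine ⟨?_, ?_, ?_, key⟩
  · apply strictAntiOn_of_deriv_neg (convex_Icc x 1) hc.continuousOn
    intro t ht
    rw [interior_Icc] at ht
    rw [(key t ht).deriv]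
    obtain ⟨htx, ht1⟩ := ht
    have ht0 : 0 < t := hx0.trans htx
    have h1t : 0 < 1 - t := by linarith
    have hd : 0 < 1 - (2 - t) * x := by nlinarith
    have hA : 1 - (t - x) / (t * (1 - (2 - t) * x))
        = (x * ((1 - t) * (1 - t))) / (t * (1 - (2 - t) * x)) := by
      rw [eq_div_iff (mul_pos ht0 hd).ne', sub_mul, div_mul_cancel₀ _ (mul_pos ht0 hd).ne']
      ring
    have hApos : 0 < 1 - (t - x) / (t * (1 - (2 - t) * x)) := by
      rw [hA]; positivity
    have hAlt : 1 - (t - x) / (t * (1 - (2 - t) * x)) < 1 := by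
      have : 0 < (t - x) / (t * (1 - (2 - t) * x)) := by
        apply div_pos (by linarith) (by positivity)
      linarith
    have := Real.log_neg hApos hAlt
    have hx2 : 0 < x / 2 := by linarith
    exact mul_neg_of_pos_of_neg hx2 this
  · have h1x : (0:ℝ) < 1 - x := by linarith
    have e1 : Real.log (x * x) = Real.log x + Real.log x := Real.log_mul hx0.ne' hx0.ne'
    have e2 : Real.log ((1 - x) * x) = Real.log (1 - x) + Real.log x :=
      Real.log_mul h1x.ne' hx0.ne'
    have e3 : Real.log ((1 - x) * (1 - x)) = Real.log (1 - x) + Real.log (1 - x) :=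
      Real.log_mul h1x.ne' h1x.ne'
    have h4 : 1 - (2 - x) * x = (1 - x) * (1 - x) := by ring
    simp only [entF, entH, entHH, h4, e1, e2, e3]
    ring
  · simp only [entF, entH, entHH]
    norm_num
    ring
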